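/- Let p be a prime and m ∈ ℕ. The ℤ_p-module M^{(m)} ⊆ ℚ_p[x,ξ] is stable under multiplication by the subalgebra A^{(m)} (i.e. A^{(m)}·M^{(m)} ⊆ M^{(m)}), and M^{(m)} is generated as an A^{(m)}-module by the finitely many elements (q^(m)_d!/d!)·x^k ξ^d with 0 ≤ d < 2p^m and 0 ≤ k ≤ 2d. -/

import Mathlib

/-!
STATEMENT 10: Let `p` be prime and `m : ℕ`. The `ℤ_[p]`-module `M^{(m)} ⊆ ℚ_[p][x,ξ]`
is stable under multiplication by the subalgebra `A^{(m)}`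
(`A^{(m)}·M^{(m)} ⊆ M^{(m)}`), and `M^{(m)}` is generated as an `A^{(m)}`-module
by the finitely many elements `(q^(m)_d!/d!)·x^k ξ^d` with `0 ≤ d < 2p^m`,
`0 ≤ k ≤ 2d`.

Here, in `ℚ_[p][x,ξ]` (realized as `MvPolynomial (Fin 2) ℚ_[p]` with `x = X 0`,
`ξ = X 1`), `A^{(m)}` is the `ℤ_[p]`-subalgebra generated by the elements
`(q^(m)_ν!/ν!)·ξ^ν`, `(q^(m)_ν!/ν!)·(xξ)^ν`, `(q^(m)_ν!/ν!)·(x²ξ)^ν` (`ν : ℕ`),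
and `M^{(m)}` is the `ℤ_[p]`-span of the elements `(q^(m)_d!/d!)·x^k ξ^d`
(`d : ℕ`, `0 ≤ k ≤ 2d`).
-/

noncomputable section

/-- `q^(m)_n = ⌊n / p^m⌋`. -/
def qm (p m n : ℕ) : ℕ := n / p ^ m

/-- The scalar `q^(m)_ν! / ν!` in `ℚ_[p]`. -/
def cm (p : ℕ) [Fact p.Prime] (m ν : ℕ) : ℚ_[p] :=
  ((qm p m ν).factorial : ℚ_[p]) / (ν.factorial : ℚ_[p])

/-- The generators `(q^(m)_ν!/ν!)·(x^k ξ)^ν`, `k = 0, 1, 2`, of `A^{(m)}`. -/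
def genA (p : ℕ) [Fact p.Prime] (m : ℕ) (g : Fin 3 × ℕ) :
    MvPolynomial (Fin 2) ℚ_[p] :=
  cm p m g.2 • ((MvPolynomial.X 0) ^ (g.1 : ℕ) * MvPolynomial.X 1) ^ g.2

/-- `A^{(m)}`: the `ℤ_[p]`-subalgebra of `ℚ_[p][x,ξ]` generated by the elements
`genA`, realized as all `ℤ_[p]`-linear combinations of products of generators. -/
def Aset (p : ℕ) [Fact p.Prime] (m : ℕ) : Set (MvPolynomial (Fin 2) ℚ_[p]) :=
  {u | ∃ (s : Finset (List (Fin 3 × ℕ))) (a : List (Fin 3 × ℕ) → ℤ_[p]),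
    u = ∑ w ∈ s, ((a w : ℚ_[p]) • (w.map (genA p m)).prod)}

/-- The spanning elements `(q^(m)_d!/d!)·x^k ξ^d` of `M^{(m)}`. -/
def genM (p : ℕ) [Fact p.Prime] (m d k : ℕ) : MvPolynomial (Fin 2) ℚ_[p] :=
  cm p m d • ((MvPolynomial.X 0) ^ k * (MvPolynomial.X 1) ^ d)

/-- `M^{(m)}`: the `ℤ_[p]`-submodule of `ℚ_[p][x,ξ]` spanned by the elements
`(q^(m)_d!/d!)·x^k ξ^d` for `d : ℕ` and `0 ≤ k ≤ 2d`. -/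
def Mset (p : ℕ) [Fact p.Prime] (m : ℕ) : Set (MvPolynomial (Fin 2) ℚ_[p]) :=
  {u | ∃ (s : Finset (ℕ × ℕ)) (a : ℕ × ℕ → ℤ_[p]),
    (∀ q ∈ s, q.2 ≤ 2 * q.1) ∧
    u = ∑ q ∈ s, ((a q : ℚ_[p]) • genM p m q.1 q.2)}

variable (p : ℕ) [hp : Fact p.Prime] (m : ℕ)

lemma legendre_split (n : ℕ) :
    padicValNat p (n.factorial) =
      padicValNat p ((qm p m n).factorial) + ∑ i ∈ Finset.Ico 1 (m+1), n / p ^ i := by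
  have hp1 : 1 < p := hp.out.one_lt
  set b := Nat.log p n + 1 with hb
  have h1 : Nat.log p n < b := Nat.lt_succ_self _
  have h2 : Nat.log p (qm p m n) < b :=
    lt_of_le_of_lt (Nat.log_mono_right (Nat.div_le_self _ _)) h1
  rw [padicValNat_factorial (p := p) (b := m + b) (by omega),
      padicValNat_factorial (p := p) (b := b) h2]
  rw [← Finset.sum_Ico_consecutive (fun i => n / p ^ i) (by omega : 1 ≤ m+1) (by omega : m+1 ≤ m+b)]
  rw [add_comm]
  congr 1
  rw [Finset.sum_Ico_eq_sum_range, Finset.sum_Ico_eq_sum_range]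
  have : m + b - (m+1) = b - 1 := by omega
  rw [this]
  apply Finset.sum_congr rfl
  intro i _
  show n / p ^ (m + 1 + i) = qm p m n / p ^ (1 + i)
  rw [qm, Nat.div_div_eq_div_mul, ← pow_add, show m + (1+i) = m+1+i by omega]

lemma sum_div_le (a b : ℕ) :
    (∑ i ∈ Finset.Ico 1 (m+1), a / p ^ i) + (∑ i ∈ Finset.Ico 1 (m+1), b / p ^ i)
      ≤ ∑ i ∈ Finset.Ico 1 (m+1), (a+b) / p ^ i := by
  rw [← Finset.sum_add_distrib]
  exact Finset.sum_le_sum fun i _ => Nat.add_div_le_add_div a b _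

lemma sum_div_pow (b : ℕ) :
    (∑ i ∈ Finset.Ico 1 (m+1), p ^ m / p ^ i) + (∑ i ∈ Finset.Ico 1 (m+1), b / p ^ i)
      = ∑ i ∈ Finset.Ico 1 (m+1), (p ^ m + b) / p ^ i := by
  have hp1 : 0 < p := hp.out.pos
  rw [← Finset.sum_add_distrib]
  apply Finset.sum_congr rfl
  intro i hi
  rw [Finset.mem_Ico] at hi
  have him : i ≤ m := by omega
  have h : p ^ m = p ^ i * p ^ (m - i) := by rw [← pow_add]; congr 1; omega
  rw [Nat.pow_div him hp1, h, Nat.mul_add_div (pow_pos hp1 i)]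

/-- numerator/denominator of the key ratio -/
def ratN (a b : ℕ) : ℕ := (qm p m a).factorial * (qm p m b).factorial * (a+b).factorial
def ratD (a b : ℕ) : ℕ := (qm p m (a+b)).factorial * a.factorial * b.factorial

lemma ratD_val_le (a b : ℕ) : padicValNat p (ratD p m a b) ≤ padicValNat p (ratN p m a b) := by
  rw [ratN, ratD,
    padicValNat.mul (Nat.mul_ne_zero (Nat.factorial_ne_zero _) (Nat.factorial_ne_zero _)) (Nat.factorial_ne_zero _),
    padicValNat.mul (Nat.factorial_ne_zero _) (Nat.factorial_ne_zero _),
    padicValNat.mul (Nat.mul_ne_zero (Nat.factorial_ne_zero _) (Nat.factorial_ne_zero _)) (Nat.factorial_ne_zero _),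
    padicValNat.mul (Nat.factorial_ne_zero _) (Nat.factorial_ne_zero _)]
  have ha := legendre_split p m a
  have hb := legendre_split p m b
  have hab := legendre_split p m (a+b)
  have := sum_div_le p m a b
  omega

lemma ratD_val_eq (b : ℕ) :
    padicValNat p (ratD p m (p^m) b) = padicValNat p (ratN p m (p^m) b) := by
  rw [ratN, ratD,
    padicValNat.mul (Nat.mul_ne_zero (Nat.factorial_ne_zero _) (Nat.factorial_ne_zero _)) (Nat.factorial_ne_zero _),
    padicValNat.mul (Nat.factorial_ne_zero _) (Nat.factorial_ne_zero _),
    padicValNat.mul (Nat.mul_ne_zero (Nat.factorial_ne_zero _) (Nat.factorial_ne_zero _)) (Nat.factorial_ne_zero _),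
    padicValNat.mul (Nat.factorial_ne_zero _) (Nat.factorial_ne_zero _)]
  have ha := legendre_split p m (p^m)
  have hb := legendre_split p m b
  have hab := legendre_split p m (p^m+b)
  have := sum_div_pow p m b
  omega

def ratv (a b : ℕ) : ℚ := (ratN p m a b : ℚ) / (ratD p m a b : ℚ)

lemma ratN_ne (a b : ℕ) : (ratN p m a b) ≠ 0 :=
  Nat.mul_ne_zero (Nat.mul_ne_zero (Nat.factorial_ne_zero _) (Nat.factorial_ne_zero _)) (Nat.factorial_ne_zero _)
lemma ratD_ne (a b : ℕ) : (ratD p m a b) ≠ 0 :=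
  Nat.mul_ne_zero (Nat.mul_ne_zero (Nat.factorial_ne_zero _) (Nat.factorial_ne_zero _)) (Nat.factorial_ne_zero _)

lemma ratv_ne (a b : ℕ) : ratv p m a b ≠ 0 :=
  div_ne_zero (Nat.cast_ne_zero.2 (ratN_ne p m a b)) (Nat.cast_ne_zero.2 (ratD_ne p m a b))

lemma ratv_val (a b : ℕ) :
    padicValRat p (ratv p m a b) =
      (padicValNat p (ratN p m a b) : ℤ) - padicValNat p (ratD p m a b) := by
  rw [ratv, padicValRat.div (Nat.cast_ne_zero.2 (ratN_ne p m a b)) (Nat.cast_ne_zero.2 (ratD_ne p m a b)),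
    padicValRat.of_nat, padicValRat.of_nat]

lemma norm_le_one_of_val {r : ℚ} (h0 : r ≠ 0) (h : 0 ≤ padicValRat p r) :
    ‖((r : ℚ) : ℚ_[p])‖ ≤ 1 := by
  rw [Padic.eq_padicNorm]
  have : padicNorm p r ≤ 1 := by
    rw [padicNorm.eq_zpow_of_nonzero h0]
    calc ((p:ℚ)) ^ (-padicValRat p r) ≤ (p:ℚ) ^ (0:ℤ) :=
      zpow_le_zpow_right₀ (by exact_mod_cast hp.out.one_le) (by omega)
    _ = 1 := zpow_zero _
  exact_mod_cast this

lemma ratv_norm_le (a b : ℕ) : ‖((ratv p m a b : ℚ) : ℚ_[p])‖ ≤ 1 :=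
  norm_le_one_of_val p (ratv_ne p m a b) (by rw [ratv_val]; have := ratD_val_le p m a b; omega)

lemma ratv_inv_norm_le (b : ℕ) : ‖(((ratv p m (p^m) b)⁻¹ : ℚ) : ℚ_[p])‖ ≤ 1 := by
  apply norm_le_one_of_val p (inv_ne_zero (ratv_ne p m _ b))
  rw [padicValRat.inv, ratv_val]
  have := ratD_val_eq p m b
  omega

lemma cm_ne_zero (ν : ℕ) : cm p m ν ≠ 0 :=
  div_ne_zero (Nat.cast_ne_zero.2 (Nat.factorial_ne_zero _)) (Nat.cast_ne_zero.2 (Nat.factorial_ne_zero _))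

lemma ratv_cast_mul (a b : ℕ) :
    ((ratv p m a b : ℚ) : ℚ_[p]) * cm p m (a+b) = cm p m a * cm p m b := by
  have h1 : ((a.factorial : ℕ) : ℚ_[p]) ≠ 0 := Nat.cast_ne_zero.2 (Nat.factorial_ne_zero _)
  have h2 : ((b.factorial : ℕ) : ℚ_[p]) ≠ 0 := Nat.cast_ne_zero.2 (Nat.factorial_ne_zero _)
  have h3 : (((a+b).factorial : ℕ) : ℚ_[p]) ≠ 0 := Nat.cast_ne_zero.2 (Nat.factorial_ne_zero _)
  have h4 : (((qm p m (a+b)).factorial : ℕ) : ℚ_[p]) ≠ 0 := Nat.cast_ne_zero.2 (Nat.factorial_ne_zero _)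
  rw [ratv, ratN, ratD, cm, cm, cm]
  push_cast
  field_simp

abbrev Pol (p : ℕ) [Fact p.Prime] := MvPolynomial (Fin 2) ℚ_[p]

def PA (w : List (Fin 3 × ℕ)) : Pol p := (w.map (genA p m)).prod
def SA : Set (Pol p) := Set.range (PA p m)
def AS : Submodule ℤ_[p] (Pol p) := Submodule.span ℤ_[p] (SA p m)
def SM : Set (Pol p) := {u | ∃ d k, k ≤ 2*d ∧ genM p m d k = u}
def MS : Submodule ℤ_[p] (Pol p) := Submodule.span ℤ_[p] (SM p m)

lemma zsmul_eq (z : ℤ_[p]) (x : Pol p) : z • x = (z : ℚ_[p]) • x :=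
  (IsScalarTower.algebraMap_smul ℚ_[p] z x).symm

lemma smul_mem_AS {c : ℚ_[p]} (h : ‖c‖ ≤ 1) {x : Pol p} (hx : x ∈ AS p m) :
    c • x ∈ AS p m := by
  have := (AS p m).smul_mem (⟨c, h⟩ : ℤ_[p]) hx
  convert this using 1; exact (zsmul_eq p (⟨c, h⟩ : ℤ_[p]) x).symm

lemma smul_mem_MS {c : ℚ_[p]} (h : ‖c‖ ≤ 1) {x : Pol p} (hx : x ∈ MS p m) :
    c • x ∈ MS p m := by
  have := (MS p m).smul_mem (⟨c, h⟩ : ℤ_[p]) hx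
  convert this using 1; exact (zsmul_eq p (⟨c, h⟩ : ℤ_[p]) x).symm

lemma one_mem_AS : (1 : Pol p) ∈ AS p m :=
  Submodule.subset_span ⟨[], by simp [PA]⟩

lemma genA_mem_AS (g : Fin 3 × ℕ) : genA p m g ∈ AS p m :=
  Submodule.subset_span ⟨[g], by simp [PA]⟩

lemma mul_mem_AS {a b : Pol p} (ha : a ∈ AS p m) (hb : b ∈ AS p m) :
    a * b ∈ AS p m := by
  have h : AS p m * AS p m ≤ AS p m := by
    rw [AS, Submodule.span_mul_span]
    apply Submodule.span_le.2
    rintro _ ⟨x, ⟨w, rfl⟩, y, ⟨w', rfl⟩, rfl⟩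
    exact Submodule.subset_span ⟨w ++ w', by simp [PA]⟩
  exact h (Submodule.mul_mem_mul ha hb)

/-- key multiplication identity -/
lemma genA_mul_genM (e : Fin 3) (ν d k : ℕ) :
    genA p m (e, ν) * genM p m d k =
      ((ratv p m ν d : ℚ) : ℚ_[p]) • genM p m (ν + d) ((e:ℕ) * ν + k) := by
  have hmono : ((MvPolynomial.X 0 ^ (e:ℕ) * MvPolynomial.X 1 : Pol p)) ^ ν *
      (MvPolynomial.X 0 ^ k * MvPolynomial.X 1 ^ d) =
      MvPolynomial.X 0 ^ ((e:ℕ)*ν+k) * MvPolynomial.X 1 ^ (ν+d) := by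
    rw [mul_pow, ← pow_mul, pow_add, pow_add]; ring
  show (cm p m ν • _) * (cm p m d • _) = _
  rw [smul_mul_smul_comm, hmono, genM, smul_smul, ratv_cast_mul]

lemma genA_mul_mem_MS (g : Fin 3 × ℕ) {x : Pol p} (hx : x ∈ MS p m) :
    genA p m g * x ∈ MS p m := by
  let f : Pol p →ₗ[ℤ_[p]] Pol p :=
    (LinearMap.mulLeft ℚ_[p] (genA p m g)).restrictScalars ℤ_[p]
  have hmap : Submodule.map f (MS p m) ≤ MS p m := by
    rw [MS, Submodule.map_span, Submodule.span_le]
    rintro _ ⟨_, ⟨d, k, hk, rfl⟩, rfl⟩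
    show genA p m g * genM p m d k ∈ MS p m
    obtain ⟨e, ν⟩ := g
    rw [genA_mul_genM]
    apply smul_mem_MS p m (ratv_norm_le p m ν d)
    apply Submodule.subset_span
    refine ⟨ν + d, (e:ℕ) * ν + k, ?_, rfl⟩
    have h2 : (e:ℕ) ≤ 2 := by omega
    have h1 : (e:ℕ) * ν ≤ 2 * ν := Nat.mul_le_mul_right ν h2
    omega
  exact hmap ⟨x, hx, rfl⟩

lemma PA_mul_genM_mem (w : List (Fin 3 × ℕ)) (d k : ℕ) (hk : k ≤ 2*d) :
    PA p m w * genM p m d k ∈ MS p m := by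
  induction w with
  | nil =>
    simpa [PA, MS] using Submodule.subset_span (show genM p m d k ∈ SM p m from ⟨d, k, hk, rfl⟩)
  | cons g w ih =>
    have : PA p m (g :: w) = genA p m g * PA p m w := by simp [PA]
    rw [this, mul_assoc]
    exact genA_mul_mem_MS p m g ih

lemma AS_mul_MS {a u : Pol p} (ha : a ∈ AS p m) (hu : u ∈ MS p m) :
    a * u ∈ MS p m := by
  have h : AS p m * MS p m ≤ MS p m := by
    rw [AS, MS, Submodule.span_mul_span, Submodule.span_le]
    rintro _ ⟨x, ⟨w, rfl⟩, y, ⟨d, k, hk, rfl⟩, rfl⟩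
    exact PA_mul_genM_mem p m w d k hk
  exact h (Submodule.mul_mem_mul ha hu)

def Ff : Finset (ℕ × ℕ) :=
  ((Finset.range (2 * p ^ m)) ×ˢ (Finset.range (4 * p ^ m))).filter (fun q => q.2 ≤ 2 * q.1)

lemma genM_rep (d : ℕ) : ∀ k, k ≤ 2*d →
    ∃ coef : ℕ × ℕ → Pol p, (∀ q, coef q ∈ AS p m) ∧
      genM p m d k = ∑ q ∈ Ff p m, coef q * genM p m q.1 q.2 := by
  induction d using Nat.strong_induction_on with
  | _ d ih =>
  intro k hk
  by_cases hd : d < 2 * p ^ m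
  · classical
    have hmem : (d, k) ∈ Ff p m :=
      Finset.mem_filter.2 ⟨Finset.mem_product.2
        ⟨Finset.mem_range.2 hd, Finset.mem_range.2 (by omega)⟩, hk⟩
    refine ⟨fun q => if q = (d, k) then 1 else 0, fun q => ?_, ?_⟩
    · dsimp only; split
      · exact one_mem_AS p m
      · exact Submodule.zero_mem _
    · symm
      rw [Finset.sum_eq_single_of_mem (d, k) hmem ?_]
      · dsimp only; rw [if_pos rfl, one_mul]
      · intro q _ hne
        dsimp only; rw [if_neg hne, zero_mul]
  · push_neg at hd
    have hp1 : 1 ≤ p ^ m := Nat.one_le_pow _ _ hp.out.pos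
    set ν := p ^ m with hν
    set d' := d - ν with hd'
    have hνd' : ν ≤ d' := by omega
    have hdd : d' < d := by omega
    have hsum : ν + d' = d := by omega
    obtain ⟨e, j, hej, hjd'⟩ : ∃ (e : Fin 3) (j : ℕ), (e:ℕ) * ν + j = k ∧ j ≤ 2*d' := by
      by_cases h2 : 2*ν ≤ k
      · exact ⟨2, k - 2*ν, by have h : ((2:Fin 3):ℕ) = 2 := rfl; rw [h]; omega, by omega⟩
      · by_cases h1 : ν ≤ k
        · exact ⟨1, k - ν, by have h : ((1:Fin 3):ℕ) = 1 := rfl; rw [h]; omega, by omega⟩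
        · exact ⟨0, k, by have h : ((0:Fin 3):ℕ) = 0 := rfl; rw [h]; omega, by omega⟩
    obtain ⟨coef, hcoef, hrep⟩ := ih d' hdd j hjd'
    have hmul := genA_mul_genM p m e ν d' j
    rw [hsum, hej] at hmul
    set r : ℚ_[p] := ((ratv p m ν d' : ℚ) : ℚ_[p]) with hr
    set w : ℚ_[p] := (((ratv p m ν d')⁻¹ : ℚ) : ℚ_[p]) with hw
    have hwr : w * r = 1 := by
      rw [hw, hr, ← Rat.cast_mul, inv_mul_cancel₀ (ratv_ne p m ν d'), Rat.cast_one]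
    have hkey : genM p m d k = w • (genA p m (e, ν) * genM p m d' j) := by
      rw [hmul, smul_smul, hwr, one_smul]
    refine ⟨fun q => w • (genA p m (e, ν) * coef q), fun q =>
      smul_mem_AS p m (ratv_inv_norm_le p m d')
        (mul_mem_AS p m (genA_mem_AS p m _) (hcoef q)), ?_⟩
    rw [hkey, hrep, Finset.mul_sum, Finset.smul_sum]
    apply Finset.sum_congr rfl
    intro q _
    rw [← mul_assoc, smul_mul_assoc]

lemma Aset_eq : Aset p m = ↑(AS p m) := by
  classical
  ext u; constructor
  · rintro ⟨s, a, rfl⟩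
    apply Submodule.sum_mem
    intro w _
    rw [← zsmul_eq]
    exact Submodule.smul_mem _ _ (Submodule.subset_span ⟨w, rfl⟩)
  · intro hu
    rw [SetLike.mem_coe, AS, Submodule.mem_span_set] at hu
    obtain ⟨c, hsupp, rfl⟩ := hu
    set g : Pol p → List (Fin 3 × ℕ) :=
      fun x => if h : ∃ w, PA p m w = x then h.choose else [] with hg
    have hgspec : ∀ x ∈ c.support, PA p m (g x) = x := by
      intro x hx
      have h : ∃ w, PA p m w = x := hsupp hx
      simp only [hg, dif_pos h]
      exact h.choose_spec
    refine ⟨c.support.image g, fun w => c (PA p m w), ?_⟩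
    rw [Finsupp.sum, Finset.sum_image
      (by intro x hx y hy hxy; rw [← hgspec x hx, ← hgspec y hy, hxy])]
    apply Finset.sum_congr rfl
    intro x hx
    simp only [show ((g x).map (genA p m)).prod = PA p m (g x) from rfl, hgspec x hx, zsmul_eq]

lemma Mset_eq : Mset p m = ↑(MS p m) := by
  classical
  ext u; constructor
  · rintro ⟨s, a, hs, rfl⟩
    apply Submodule.sum_mem
    intro q hq
    rw [← zsmul_eq]
    exact Submodule.smul_mem _ _ (Submodule.subset_span ⟨q.1, q.2, hs q hq, rfl⟩)
  · intro hu
    rw [SetLike.mem_coe, MS, Submodule.mem_span_set] at hu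
    obtain ⟨c, hsupp, rfl⟩ := hu
    set g : Pol p → ℕ × ℕ :=
      fun x => if h : ∃ q : ℕ × ℕ, q.2 ≤ 2 * q.1 ∧ genM p m q.1 q.2 = x
        then h.choose else (0, 0) with hg
    have hex : ∀ x ∈ c.support, ∃ q : ℕ × ℕ, q.2 ≤ 2 * q.1 ∧ genM p m q.1 q.2 = x := by
      intro x hx
      obtain ⟨d, k, hk, hdk⟩ := hsupp hx
      exact ⟨(d, k), hk, hdk⟩
    have hgspec : ∀ x ∈ c.support, (g x).2 ≤ 2 * (g x).1 ∧ genM p m (g x).1 (g x).2 = x := by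
      intro x hx
      have h := hex x hx
      simp only [hg, dif_pos h]
      exact h.choose_spec
    refine ⟨c.support.image g, fun q => c (genM p m q.1 q.2), ?_, ?_⟩
    · intro q hq
      obtain ⟨x, hx, rfl⟩ := Finset.mem_image.1 hq
      exact (hgspec x hx).1
    · rw [Finsupp.sum, Finset.sum_image
        (by intro x hx y hy hxy; rw [← (hgspec x hx).2, ← (hgspec y hy).2, hxy])]
      apply Finset.sum_congr rfl
      intro x hx
      simp only [(hgspec x hx).2, zsmul_eq]

lemma MS_rep : ∀ u ∈ MS p m, ∃ coef : ℕ × ℕ → Pol p,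
    (∀ q, coef q ∈ AS p m) ∧ u = ∑ q ∈ Ff p m, coef q * genM p m q.1 q.2 := by
  intro u hu
  induction hu using Submodule.span_induction with
  | mem x hx =>
    obtain ⟨d, k, hk, rfl⟩ := hx
    exact genM_rep p m d k hk
  | zero =>
    exact ⟨0, fun q => Submodule.zero_mem _, by simp⟩
  | add x y _ _ hx hy =>
    obtain ⟨cx, hcx, rfl⟩ := hx
    obtain ⟨cy, hcy, rfl⟩ := hy
    refine ⟨fun q => cx q + cy q, fun q => Submodule.add_mem _ (hcx q) (hcy q), ?_⟩
    rw [← Finset.sum_add_distrib]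
    apply Finset.sum_congr rfl
    intros; rw [add_mul]
  | smul z x _ hx =>
    obtain ⟨cx, hcx, rfl⟩ := hx
    refine ⟨fun q => z • cx q, fun q => Submodule.smul_mem _ _ (hcx q), ?_⟩
    rw [Finset.smul_sum]
    apply Finset.sum_congr rfl
    intros; rw [smul_mul_assoc]


end

section
variable (p : ℕ) [hp : Fact p.Prime] (m : ℕ)

theorem Mset_module_finite_over_Aset (p : ℕ) [Fact p.Prime] (m : ℕ) :
    (∀ a ∈ Aset p m, ∀ u ∈ Mset p m, a * u ∈ Mset p m) ∧
    (∀ u ∈ Mset p m,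
      ∃ coef : ℕ × ℕ → MvPolynomial (Fin 2) ℚ_[p],
        (∀ q, coef q ∈ Aset p m) ∧
        u = ∑ q ∈ ((Finset.range (2 * p ^ m)) ×ˢ (Finset.range (4 * p ^ m))).filter
              (fun q => q.2 ≤ 2 * q.1),
            coef q * genM p m q.1 q.2) := by
  constructor
  · intro a ha u hu
    rw [Aset_eq] at ha
    rw [Mset_eq] at hu ⊢
    exact AS_mul_MS p m ha hu
  · intro u hu
    rw [Mset_eq] at hu
    obtain ⟨coef, hcoef, hrep⟩ := MS_rep p m u hu
    refine ⟨coef, fun q => ?_, hrep⟩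
    rw [Aset_eq]
    exact hcoef q


end
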